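/- Let λ_v and λ_x be complex numbers. If every complex root ν of ν² − λ_v·ν − λ_x = 0 has negative real part, then Re(λ_v) < 0 and 2·Re(λ_x) − |λ_v|² < 0. -/

import Mathlib

/-- Appendix B of the paper: the two necessary stability conditions obtained
from the Liénard–Chipart criterion. If every root of
`ν² − λ_v·ν − λ_x = 0` has negative real part, then `Re λ_v < 0` and
`2·Re λ_x − |λ_v|² < 0`. -/
theorem necessary_conditions_of_hurwitz (lv lx : ℂ)
    (h : ∀ ν : ℂ, ν ^ 2 - lv * ν - lx = 0 → ν.re < 0) :
    lv.re < 0 ∧ 2 * lx.re - ‖lv‖ ^ 2 < 0 := by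
  obtain ⟨s, hs⟩ : ∃ s : ℂ, s ^ 2 = lv ^ 2 + 4 * lx := by
    rcases IsAlgClosed.exists_pow_nat_eq (k := ℂ) (lv ^ 2 + 4 * lx) (n := 2) (by norm_num) with ⟨s, hs⟩
    exact ⟨s, hs⟩
  set ν₁ : ℂ := (lv + s) / 2 with hν₁
  set ν₂ : ℂ := (lv - s) / 2 with hν₂
  have h1 : ν₁.re < 0 := by
    apply h
    rw [hν₁]; linear_combination hs / 4
  have h2 : ν₂.re < 0 := by
    apply h
    rw [hν₂]; linear_combination hs / 4
  have hlv : lv = ν₁ + ν₂ := by rw [hν₁, hν₂]; ring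
  have hlx : lx = -(ν₁ * ν₂) := by
    rw [hν₁, hν₂]; field_simp; linear_combination -hs
  have hre : lv.re = ν₁.re + ν₂.re := by rw [hlv, Complex.add_re]
  constructor
  · rw [hre]; linarith
  · have habs : ‖lv‖ ^ 2 = lv.re ^ 2 + lv.im ^ 2 := by
      rw [Complex.sq_norm, Complex.normSq_apply]; ring
    have him : lv.im = ν₁.im + ν₂.im := by rw [hlv, Complex.add_im]
    have hlxre : lx.re = -(ν₁.re * ν₂.re - ν₁.im * ν₂.im) := by
      rw [hlx, Complex.neg_re, Complex.mul_re]
    rw [habs, hre, him, hlxre]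
    nlinarith [mul_pos (neg_pos.2 h1) (neg_pos.2 h2), sq_nonneg (ν₁.re - ν₂.re),
      sq_nonneg (ν₁.im + ν₂.im), sq_nonneg (ν₁.im - ν₂.im)]
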